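/- Let ρ₁ : B₁ → B₁₂ and ρ₂ : B₂ → B₁₂ be unital ring homomorphisms with ρ₂ surjective, and let B := {(b₁,b₂) ∈ B₁ × B₂ : ρ₁(b₁) = ρ₂(b₂)} be the pullback ring. Let a ∈ M_n(B₁₂) be an invertible matrix and let c, d ∈ M_n(B₂) satisfy (entrywise) ρ₂(c) = a and ρ₂(d) = a⁻¹. Let M := {(x,y) ∈ B₁ⁿ × B₂ⁿ : (entrywise ρ₁ of the row vector x)·a = entrywise ρ₂ of the row vector y}, a left B-module under componentwise multiplication. Let p_a ∈ M_{2n}(B) be the block matrix with entries in B₁ × B₂ given by p_a = [[(Iₙ, c(2−dc)d), (0, c(2−dc)(1−dc))], [(0, (1−dc)d), (0, (1−dc)²)]] (its entries lie in B because entrywise ρ₂ of c(2−dc)d is Iₙ and entrywise ρ₂ of the other three blocks is 0). Then M is isomorphic as a left B-module to B^{2n}·p_a = {v ∈ B^{2n} : v·p_a = v}, the image of right multiplication by the idempotent p_a; in particular M is a finitely generated projective left B-module. -/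

import Mathlib

open Matrix

section MilnorClutching

variable {B₁ B₂ B₁₂ : Type*} [Ring B₁] [Ring B₂] [Ring B₁₂]

/-- The pullback ring `B = {(b₁,b₂) ∈ B₁ × B₂ | ρ₁(b₁) = ρ₂(b₂)}`, as a subring of
`B₁ × B₂`. -/
def pullbackRing (ρ₁ : B₁ →+* B₁₂) (ρ₂ : B₂ →+* B₁₂) : Subring (B₁ × B₂) :=
  RingHom.eqLocus (ρ₁.comp (RingHom.fst B₁ B₂)) (ρ₂.comp (RingHom.snd B₁ B₂))

private lemma vecMul_mul_left {R : Type*} [Ring R] {ι : Type*} [Fintype ι]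
    (r : R) (w : ι → R) (M : Matrix ι ι R) :
    Matrix.vecMul (fun i => r * w i) M = fun j => r * Matrix.vecMul w M j := by
  funext j
  simp [Matrix.vecMul, dotProduct, Finset.mul_sum, mul_assoc]

private lemma vecMul_map' {R S : Type*} [Ring R] [Ring S] {ι κ : Type*} [Fintype ι]
    (f : R →+* S) (v : ι → R) (M : Matrix ι κ R) :
    (fun j => f ((Matrix.vecMul v M) j)) = Matrix.vecMul (fun i => f (v i)) (M.map f) := by
  funext j
  rw [f.map_vecMul M v j]
  rfl

/-- The left `B`-module `M = {(x,y) ∈ B₁ⁿ × B₂ⁿ | (ρ₁ x)·a = ρ₂ y}`, realized as a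
submodule of `Fin n → (B₁ × B₂)` over the pullback ring. -/
def clutchedModule (ρ₁ : B₁ →+* B₁₂) (ρ₂ : B₂ →+* B₁₂) {n : ℕ}
    (a : Matrix (Fin n) (Fin n) B₁₂) :
    Submodule ↥(pullbackRing ρ₁ ρ₂) (Fin n → B₁ × B₂) where
  carrier := {v | Matrix.vecMul (fun i => ρ₁ (v i).1) a = fun i => ρ₂ (v i).2}
  zero_mem' := by
    show Matrix.vecMul (fun i => ρ₁ ((0 : Fin _ → B₁ × B₂) i).1) a
      = fun i => ρ₂ ((0 : Fin _ → B₁ × B₂) i).2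
    funext j
    simp [Matrix.vecMul, dotProduct]
  add_mem' := by
    intro u v hu hv
    show Matrix.vecMul (fun i => ρ₁ ((u + v) i).1) a = fun i => ρ₂ ((u + v) i).2
    have h : (fun i => ρ₁ ((u + v) i).1)
        = (fun i => ρ₁ (u i).1) + fun i => ρ₁ (v i).1 := by
      funext i; simp
    rw [h, Matrix.add_vecMul, hu, hv]
    funext i; simp
  smul_mem' := by
    intro r v hv
    show Matrix.vecMul (fun i => ρ₁ ((r • v) i).1) a = fun i => ρ₂ ((r • v) i).2
    have hr : ρ₁ (r : B₁ × B₂).1 = ρ₂ (r : B₁ × B₂).2 := r.2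
    have h1 : (fun i => ρ₁ ((r • v) i).1)
        = fun i => ρ₁ (r : B₁ × B₂).1 * ρ₁ (v i).1 := by
      funext i
      show ρ₁ ((r : B₁ × B₂) * v i).1 = _
      simp
    rw [h1, vecMul_mul_left, hv]
    funext i
    show ρ₁ (r : B₁ × B₂).1 * ρ₂ (v i).2 = ρ₂ ((r : B₁ × B₂) * v i).2
    rw [hr]
    simp

/-- The submodule `B^{2n}·p = {v ∈ B^{2n} | v·p = v}` of vectors in the pullback ring
fixed by right multiplication with a matrix `p` whose two components are `q₁` (over `B₁`)
and `q₂` (over `B₂`). -/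
def fixedSubmodule (ρ₁ : B₁ →+* B₁₂) (ρ₂ : B₂ →+* B₁₂) {ι : Type*} [Fintype ι]
    (q₁ : Matrix ι ι B₁) (q₂ : Matrix ι ι B₂) :
    Submodule ↥(pullbackRing ρ₁ ρ₂) (ι → B₁ × B₂) where
  carrier := {v | (∀ i, ρ₁ (v i).1 = ρ₂ (v i).2) ∧
    Matrix.vecMul (fun i => (v i).1) q₁ = (fun i => (v i).1) ∧
    Matrix.vecMul (fun i => (v i).2) q₂ = fun i => (v i).2}
  zero_mem' := by
    refine ⟨by simp, ?_, ?_⟩ <;>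
      · funext j; simp [Matrix.vecMul, dotProduct]
  add_mem' := by
    rintro u v ⟨hu0, hu1, hu2⟩ ⟨hv0, hv1, hv2⟩
    refine ⟨fun i => by simp [hu0 i, hv0 i], ?_, ?_⟩
    · have h : (fun i => ((u + v) i).1) = (fun i => (u i).1) + fun i => (v i).1 := by
        funext i; simp
      rw [h, Matrix.add_vecMul, hu1, hv1]
    · have h : (fun i => ((u + v) i).2) = (fun i => (u i).2) + fun i => (v i).2 := by
        funext i; simp
      rw [h, Matrix.add_vecMul, hu2, hv2]
  smul_mem' := by
    rintro r v ⟨hv0, hv1, hv2⟩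
    have hr : ρ₁ (r : B₁ × B₂).1 = ρ₂ (r : B₁ × B₂).2 := r.2
    have h1 : ∀ i, ((r • v) i).1 = (r : B₁ × B₂).1 * (v i).1 := fun i => rfl
    have h2 : ∀ i, ((r • v) i).2 = (r : B₁ × B₂).2 * (v i).2 := fun i => rfl
    refine ⟨fun i => ?_, ?_, ?_⟩
    · rw [h1 i, h2 i, RingHom.map_mul, RingHom.map_mul, hv0 i, hr]
    · have h : (fun i => ((r • v) i).1) = fun i => (r : B₁ × B₂).1 * (v i).1 := by
        funext i; exact h1 i
      rw [h, vecMul_mul_left, hv1]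
    · have h : (fun i => ((r • v) i).2) = fun i => (r : B₁ × B₂).2 * (v i).2 := by
        funext i; exact h2 i
      rw [h, vecMul_mul_left, hv2]

set_option maxHeartbeats 2000000 in
set_option synthInstance.maxHeartbeats 400000 in
/-- **Statement 3 (Milnor clutching).** Let `ρ₁ : B₁ → B₁₂` and `ρ₂ : B₂ → B₁₂` be unital
ring homomorphisms with `ρ₂` surjective, `B` the pullback ring, `a ∈ Mₙ(B₁₂)` invertible
with inverse `a'`, and `c, d ∈ Mₙ(B₂)` entrywise lifts of `a` and `a⁻¹` along `ρ₂`.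
Form the Milnor block matrix
`p_a = [[(Iₙ, c(2−dc)d), (0, c(2−dc)(1−dc))], [(0, (1−dc)d), (0, (1−dc)²)]]`.
Then its entries lie in `B`, and the module
`M = {(x,y) ∈ B₁ⁿ × B₂ⁿ | (ρ₁ x)·a = ρ₂ y}` is isomorphic as a left `B`-module to
`B^{2n}·p_a = {v ∈ B^{2n} | v·p_a = v}`; in particular, `M` is a finitely generated
projective left `B`-module. -/
theorem milnor_clutching_module_iso {n : ℕ}
    (ρ₁ : B₁ →+* B₁₂) (ρ₂ : B₂ →+* B₁₂) (hρ₂ : Function.Surjective ρ₂)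
    (a a' : Matrix (Fin n) (Fin n) B₁₂) (haa' : a * a' = 1) (ha'a : a' * a = 1)
    (c d : Matrix (Fin n) (Fin n) B₂) (hc : c.map ρ₂ = a) (hd : d.map ρ₂ = a') :
    (∀ i j, ρ₁ ((Matrix.fromBlocks (1 : Matrix (Fin n) (Fin n) B₁) 0 0 0) i j) =
        ρ₂ ((Matrix.fromBlocks (c * (2 - d * c) * d) (c * (2 - d * c) * (1 - d * c))
          ((1 - d * c) * d) ((1 - d * c) ^ 2)) i j)) ∧
    Nonempty (clutchedModule ρ₁ ρ₂ a ≃ₗ[↥(pullbackRing ρ₁ ρ₂)]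
      fixedSubmodule ρ₁ ρ₂ (Matrix.fromBlocks (1 : Matrix (Fin n) (Fin n) B₁) 0 0 0)
        (Matrix.fromBlocks (c * (2 - d * c) * d) (c * (2 - d * c) * (1 - d * c))
          ((1 - d * c) * d) ((1 - d * c) ^ 2))) ∧
    Module.Finite ↥(pullbackRing ρ₁ ρ₂) (clutchedModule ρ₁ ρ₂ a) ∧
    Module.Projective ↥(pullbackRing ρ₁ ρ₂) (clutchedModule ρ₁ ρ₂ a) := by
  classical
  set q₁ : Matrix (Fin n ⊕ Fin n) (Fin n ⊕ Fin n) B₁ := Matrix.fromBlocks 1 0 0 0 with hq₁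
  set q₂ : Matrix (Fin n ⊕ Fin n) (Fin n ⊕ Fin n) B₂ :=
    Matrix.fromBlocks (c * (2 - d * c) * d) (c * (2 - d * c) * (1 - d * c))
      ((1 - d * c) * d) ((1 - d * c) ^ 2) with hq₂
  set e₂ : Matrix (Fin n ⊕ Fin n) (Fin n ⊕ Fin n) B₂ := Matrix.fromBlocks 1 0 0 0 with he₂
  set α : Matrix (Fin n ⊕ Fin n) (Fin n ⊕ Fin n) B₂ :=
    Matrix.fromBlocks (c * (2 - d * c)) (c * d - 1) (1 - d * c) d with hα
  set α' : Matrix (Fin n ⊕ Fin n) (Fin n ⊕ Fin n) B₂ :=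
    Matrix.fromBlocks d (1 - d * c) (c * d - 1) (c * (2 - d * c)) with hα'
  clear_value q₁ q₂ e₂ α α'
  -- basic matrix identities
  have hαα' : α * α' = 1 := by
    rw [hα, hα', Matrix.fromBlocks_multiply, ← Matrix.fromBlocks_one, Matrix.fromBlocks_inj]
    refine ⟨?_, ?_, ?_, ?_⟩ <;> noncomm_ring
  have hα'α : α' * α = 1 := by
    rw [hα, hα', Matrix.fromBlocks_multiply, ← Matrix.fromBlocks_one, Matrix.fromBlocks_inj]
    refine ⟨?_, ?_, ?_, ?_⟩ <;> noncomm_ring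
  have hconj : α * e₂ * α' = q₂ := by
    rw [hα, hα', he₂, hq₂, Matrix.fromBlocks_multiply, Matrix.fromBlocks_multiply,
      Matrix.fromBlocks_inj]
    refine ⟨?_, ?_, ?_, ?_⟩ <;> noncomm_ring
  have he₂idem : e₂ * e₂ = e₂ := by
    rw [he₂, Matrix.fromBlocks_multiply]
    simp
  have hq₂idem : q₂ * q₂ = q₂ := by
    rw [← hconj]
    calc α * e₂ * α' * (α * e₂ * α') = α * e₂ * (α' * α) * e₂ * α' := by noncomm_ring
    _ = α * e₂ * e₂ * α' := by rw [hα'α, mul_one]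
    _ = α * e₂ * α' := by rw [mul_assoc α e₂ e₂, he₂idem]
  have hq₁idem : q₁ * q₁ = q₁ := by
    rw [hq₁, Matrix.fromBlocks_multiply]
    simp
  have hα'q₂ : α' * q₂ = e₂ * α' := by
    rw [← hconj]
    calc α' * (α * e₂ * α') = (α' * α) * (e₂ * α') := by noncomm_ring
    _ = e₂ * α' := by rw [hα'α, one_mul]
  have hαe₂ : α * e₂ = q₂ * α := by
    rw [← hconj]
    calc α * e₂ = α * e₂ * (α' * α) := by rw [hα'α, mul_one]
    _ = α * e₂ * α' * α := by noncomm_ring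
  -- ρ₂-images
  have hc' : ρ₂.mapMatrix c = a := hc
  have hd' : ρ₂.mapMatrix d = a' := hd
  have h21 : (2 : Matrix (Fin n) (Fin n) B₁₂) - 1 = 1 := by norm_num
  have hA : (c * (2 - d * c) * d).map ρ₂ = 1 := by
    show ρ₂.mapMatrix (c * (2 - d * c) * d) = 1
    rw [_root_.map_mul, _root_.map_mul, _root_.map_sub, _root_.map_mul, hc', hd', map_ofNat,
      ha'a, h21, mul_one, haa']
  have hB : (c * (2 - d * c) * (1 - d * c)).map ρ₂ = 0 := by
    show ρ₂.mapMatrix _ = 0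
    rw [_root_.map_mul, _root_.map_mul, _root_.map_sub, _root_.map_mul, _root_.map_sub,
      _root_.map_mul, _root_.map_one, hc', hd', map_ofNat, ha'a, sub_self, mul_zero]
  have hC : ((1 - d * c) * d).map ρ₂ = 0 := by
    show ρ₂.mapMatrix _ = 0
    rw [_root_.map_mul, _root_.map_sub, _root_.map_mul, _root_.map_one, hc', hd', ha'a,
      sub_self, zero_mul]
  have hD : ((1 - d * c) ^ 2).map ρ₂ = 0 := by
    show ρ₂.mapMatrix _ = 0
    rw [_root_.map_pow, _root_.map_sub, _root_.map_mul, _root_.map_one, hc', hd', ha'a, sub_self]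
    rw [sq, mul_zero]
  have hmapq₂ : q₂.map ρ₂ = Matrix.fromBlocks 1 0 0 0 := by
    rw [hq₂, Matrix.fromBlocks_map, hA, hB, hC, hD]
  have hmapq₁ : q₁.map ρ₁ = Matrix.fromBlocks 1 0 0 0 := by
    rw [hq₁, Matrix.fromBlocks_map,
      Matrix.map_one ρ₁ (map_zero ρ₁) (map_one ρ₁),
      Matrix.map_zero ρ₁ (map_zero ρ₁)]
  have hmapα : α.map ρ₂ = Matrix.fromBlocks a 0 0 a' := by
    rw [hα, Matrix.fromBlocks_map, Matrix.fromBlocks_inj]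
    refine ⟨?_, ?_, ?_, hd⟩
    · show ρ₂.mapMatrix _ = a
      rw [_root_.map_mul, _root_.map_sub, _root_.map_mul, hc', hd', map_ofNat, ha'a, h21,
        mul_one]
    · show ρ₂.mapMatrix _ = 0
      rw [_root_.map_sub, _root_.map_mul, _root_.map_one, hc', hd', haa', sub_self]
    · show ρ₂.mapMatrix _ = 0
      rw [_root_.map_sub, _root_.map_mul, _root_.map_one, hc', hd', ha'a, sub_self]
  have hmapα' : α'.map ρ₂ = Matrix.fromBlocks a' 0 0 a := by
    rw [hα', Matrix.fromBlocks_map, Matrix.fromBlocks_inj]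
    refine ⟨hd, ?_, ?_, ?_⟩
    · show ρ₂.mapMatrix _ = 0
      rw [_root_.map_sub, _root_.map_mul, _root_.map_one, hc', hd', ha'a, sub_self]
    · show ρ₂.mapMatrix _ = 0
      rw [_root_.map_sub, _root_.map_mul, _root_.map_one, hc', hd', haa', sub_self]
    · show ρ₂.mapMatrix _ = a
      rw [_root_.map_mul, _root_.map_sub, _root_.map_mul, hc', hd', map_ofNat, ha'a, h21,
        mul_one]
  -- the raw maps
  set F₁ : (Fin n → B₁ × B₂) → ((Fin n ⊕ Fin n) → B₁ × B₂) := fun v i =>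
    (Sum.elim (fun j => (v j).1) 0 i,
      Matrix.vecMul (Sum.elim (fun j => (v j).2) 0) α' i) with hF₁
  set G₁ : ((Fin n ⊕ Fin n) → B₁ × B₂) → (Fin n → B₁ × B₂) := fun w j =>
    ((w (Sum.inl j)).1, Matrix.vecMul (fun i => (w i).2) α (Sum.inl j)) with hG₁
  -- a little helper: Sum.elim x 0 is fixed under vecMul by fromBlocks 1 0 0 0
  have hfix₁ : ∀ x : Fin n → B₁, Matrix.vecMul (Sum.elim x 0) q₁ = Sum.elim x 0 := by
    intro x
    rw [hq₁, Matrix.vecMul_fromBlocks]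
    funext k
    cases k <;> simp
  have hfix₂ : ∀ x : Fin n → B₂, Matrix.vecMul (Sum.elim x 0) e₂ = Sum.elim x 0 := by
    intro x
    rw [he₂, Matrix.vecMul_fromBlocks]
    funext k
    cases k <;> simp
  -- membership of F₁
  have hmemF : ∀ v, v ∈ clutchedModule ρ₁ ρ₂ a →
      F₁ v ∈ fixedSubmodule ρ₁ ρ₂ q₁ q₂ := by
    intro v hv
    replace hv : Matrix.vecMul (fun i => ρ₁ (v i).1) a = fun i => ρ₂ (v i).2 := hv
    have hy : (fun i => ρ₂ (Sum.elim (fun j => (v j).2) 0 i))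
        = Sum.elim (fun j => ρ₂ (v j).2) (0 : Fin n → B₁₂) := by
      funext i; cases i <;> simp
    have hsnd : (fun i => ρ₂ ((F₁ v) i).2)
        = Sum.elim (fun j => ρ₁ (v j).1) (0 : Fin n → B₁₂) := by
      have := vecMul_map' ρ₂ (Sum.elim (fun j => (v j).2) 0) α'
      show (fun i => ρ₂ (Matrix.vecMul (Sum.elim (fun j => (v j).2) 0) α' i)) = _
      rw [this, hy, hmapα', Matrix.vecMul_fromBlocks]
      simp only [Sum.elim_comp_inl, Sum.elim_comp_inr, Matrix.vecMul_zero,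
        Matrix.zero_vecMul, add_zero, zero_add]
      rw [← hv, Matrix.vecMul_vecMul, haa', Matrix.vecMul_one]
    refine ⟨?_, ?_, ?_⟩
    · intro i
      have h2 := congrFun hsnd i
      show ρ₁ (Sum.elim (fun j => (v j).1) 0 i) = ρ₂ ((F₁ v) i).2
      rw [h2]
      cases i <;> simp
    · show Matrix.vecMul (fun i => ((F₁ v) i).1) q₁ = fun i => ((F₁ v) i).1
      have : (fun i => ((F₁ v) i).1) = Sum.elim (fun j => (v j).1) 0 := rfl
      rw [this]
      exact hfix₁ _
    · show Matrix.vecMul (fun i => ((F₁ v) i).2) q₂ = fun i => ((F₁ v) i).2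
      have h : (fun i => ((F₁ v) i).2)
          = Matrix.vecMul (Sum.elim (fun j => (v j).2) 0) α' := rfl
      rw [h, Matrix.vecMul_vecMul, hα'q₂, ← Matrix.vecMul_vecMul,
        hfix₂ (fun j => (v j).2)]
  -- membership of G₁
  have hmemG : ∀ w, w ∈ fixedSubmodule ρ₁ ρ₂ q₁ q₂ →
      G₁ w ∈ clutchedModule ρ₁ ρ₂ a := by
    rintro w ⟨h0, h1, h2⟩
    show Matrix.vecMul (fun j => ρ₁ ((G₁ w) j).1) a = fun j => ρ₂ ((G₁ w) j).2
    have hsnd : (fun i => ρ₂ (Matrix.vecMul (fun k => (w k).2) α i))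
        = Matrix.vecMul (fun i => ρ₁ (w i).1) (Matrix.fromBlocks a 0 0 a') := by
      rw [vecMul_map' ρ₂ (fun k => (w k).2) α, hmapα]
      have h0' : (fun k => ρ₂ (w k).2) = fun i => ρ₁ (w i).1 := by
        funext i
        exact (h0 i).symm
      rw [h0']
    funext j
    have := congrFun hsnd (Sum.inl j)
    show Matrix.vecMul (fun j => ρ₁ ((w (Sum.inl j)).1)) a j
      = ρ₂ (Matrix.vecMul (fun i => (w i).2) α (Sum.inl j))
    rw [this, Matrix.vecMul_fromBlocks]
    simp only [Sum.elim_inl, Pi.add_apply, Matrix.vecMul_zero, Pi.zero_apply, add_zero]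
    rfl
  -- G₁ is a left inverse of F₁
  have hGF : ∀ v : Fin n → B₁ × B₂, G₁ (F₁ v) = v := by
    intro v
    funext j
    refine Prod.ext rfl ?_
    show Matrix.vecMul (fun i => ((F₁ v) i).2) α (Sum.inl j) = (v j).2
    have h : (fun i => ((F₁ v) i).2)
        = Matrix.vecMul (Sum.elim (fun j => (v j).2) 0) α' := rfl
    rw [h, Matrix.vecMul_vecMul, hα'α, Matrix.vecMul_one]
    rfl
  -- F₁ is a left inverse of G₁ on the fixed submodule
  have hFG : ∀ w, w ∈ fixedSubmodule ρ₁ ρ₂ q₁ q₂ → F₁ (G₁ w) = w := by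
    rintro w ⟨h0, h1, h2⟩
    have hw₁ : Sum.elim (fun j => (w (Sum.inl j)).1) (0 : Fin n → B₁) = fun i => (w i).1 := by
      rw [← h1, hq₁, Matrix.vecMul_fromBlocks]
      funext i
      cases i <;> simp
    have hz : Sum.elim (fun j => Matrix.vecMul (fun i => (w i).2) α (Sum.inl j)) (0 : Fin n → B₂)
        = Matrix.vecMul (fun i => (w i).2) α := by
      have step1 : Matrix.vecMul (Matrix.vecMul (fun i => (w i).2) α) e₂
          = Matrix.vecMul (fun i => (w i).2) α := by
        rw [Matrix.vecMul_vecMul, hαe₂, ← Matrix.vecMul_vecMul, h2]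
      rw [← step1, he₂, Matrix.vecMul_fromBlocks]
      funext i
      cases i <;> simp
    funext i
    refine Prod.ext ?_ ?_
    · show Sum.elim (fun j => ((G₁ w) j).1) 0 i = (w i).1
      have : (fun j => ((G₁ w) j).1) = fun j => (w (Sum.inl j)).1 := rfl
      rw [this]
      exact congrFun hw₁ i
    · show Matrix.vecMul (Sum.elim (fun j => ((G₁ w) j).2) 0) α' i = (w i).2
      have h : (fun j => ((G₁ w) j).2)
          = fun j => Matrix.vecMul (fun i => (w i).2) α (Sum.inl j) := rfl
      rw [h, hz, Matrix.vecMul_vecMul, hαα', Matrix.vecMul_one]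
  -- additivity and linearity of F₁ and G₁
  have hFadd : ∀ u v : Fin n → B₁ × B₂, F₁ (u + v) = F₁ u + F₁ v := by
    intro u v
    funext i
    refine Prod.ext ?_ ?_
    · show Sum.elim (fun j => ((u + v) j).1) 0 i = _
      cases i <;> simp [hF₁]
    · show Matrix.vecMul (Sum.elim (fun j => ((u + v) j).2) 0) α' i = _
      have h : Sum.elim (fun j => ((u + v) j).2) (0 : Fin n → B₂)
          = Sum.elim (fun j => (u j).2) (0 : Fin n → B₂)
            + Sum.elim (fun j => (v j).2) (0 : Fin n → B₂) := by
        funext k; cases k <;> simp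
      rw [h, Matrix.add_vecMul]
      rfl
  have hFsmul : ∀ (r : ↥(pullbackRing ρ₁ ρ₂)) (v : Fin n → B₁ × B₂),
      F₁ (r • v) = r • F₁ v := by
    intro r v
    funext i
    refine Prod.ext ?_ ?_
    · show Sum.elim (fun j => ((r • v) j).1) 0 i = ((r : B₁ × B₂) * (F₁ v i)).1
      cases i with
      | inl j => rfl
      | inr j => exact (mul_zero _).symm
    · show Matrix.vecMul (Sum.elim (fun j => ((r • v) j).2) 0) α' i
        = ((r : B₁ × B₂) * (F₁ v i)).2
      have h : Sum.elim (fun j => ((r • v) j).2) (0 : Fin n → B₂)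
          = fun k => (r : B₁ × B₂).2 * Sum.elim (fun j => (v j).2) (0 : Fin n → B₂) k := by
        funext k
        cases k with
        | inl j => rfl
        | inr j => exact (mul_zero _).symm
      rw [h, vecMul_mul_left]
      rfl
  -- the linear maps
  let Fmap : clutchedModule ρ₁ ρ₂ a →ₗ[↥(pullbackRing ρ₁ ρ₂)]
      fixedSubmodule ρ₁ ρ₂ q₁ q₂ :=
    { toFun := fun v => ⟨F₁ v.1, hmemF v.1 v.2⟩
      map_add' := fun u v => Subtype.ext (hFadd u.1 v.1)
      map_smul' := fun r v => Subtype.ext (hFsmul r v.1) }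
  have hGadd : ∀ u v : (Fin n ⊕ Fin n) → B₁ × B₂, G₁ (u + v) = G₁ u + G₁ v := by
    intro u v
    funext j
    refine Prod.ext rfl ?_
    show Matrix.vecMul (fun i => ((u + v) i).2) α (Sum.inl j) = _
    have h : (fun i => ((u + v) i).2) = (fun i => (u i).2) + fun i => (v i).2 := rfl
    rw [h, Matrix.add_vecMul]
    rfl
  have hGsmul : ∀ (r : ↥(pullbackRing ρ₁ ρ₂)) (w : (Fin n ⊕ Fin n) → B₁ × B₂),
      G₁ (r • w) = r • G₁ w := by
    intro r w
    funext j
    refine Prod.ext rfl ?_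
    show Matrix.vecMul (fun i => ((r • w) i).2) α (Sum.inl j) = ((r : B₁ × B₂) * G₁ w j).2
    have h : (fun i => ((r • w) i).2) = fun i => (r : B₁ × B₂).2 * (w i).2 := rfl
    rw [h, vecMul_mul_left]
    rfl
  let Gmap : fixedSubmodule ρ₁ ρ₂ q₁ q₂ →ₗ[↥(pullbackRing ρ₁ ρ₂)]
      clutchedModule ρ₁ ρ₂ a :=
    { toFun := fun w => ⟨G₁ w.1, hmemG w.1 w.2⟩
      map_add' := fun u v => Subtype.ext (hGadd u.1 v.1)
      map_smul' := fun r w => Subtype.ext (hGsmul r w.1) }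
  have hFGmap : Fmap.comp Gmap = LinearMap.id := by
    apply LinearMap.ext
    intro w
    exact Subtype.ext (hFG w.1 w.2)
  have hGFmap : Gmap.comp Fmap = LinearMap.id := by
    apply LinearMap.ext
    intro v
    exact Subtype.ext (hGF v.1)
  let E : ↥(clutchedModule ρ₁ ρ₂ a) ≃ₗ[↥(pullbackRing ρ₁ ρ₂)] ↥(fixedSubmodule ρ₁ ρ₂ q₁ q₂) :=
    LinearEquiv.ofLinear Fmap Gmap hFGmap hGFmap
  -- the split maps for finiteness and projectivity
  have hmemR : ∀ (w : ↥(fixedSubmodule ρ₁ ρ₂ q₁ q₂)) (k : Fin n ⊕ Fin n),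
      w.1 k ∈ pullbackRing ρ₁ ρ₂ := fun w k => w.2.1 k
  let inc : ↥(fixedSubmodule ρ₁ ρ₂ q₁ q₂) →ₗ[↥(pullbackRing ρ₁ ρ₂)]
      (Fin n ⊕ Fin n → ↥(pullbackRing ρ₁ ρ₂)) :=
    { toFun := fun w k => ⟨w.1 k, hmemR w k⟩
      map_add' := fun u v => by funext k; exact Subtype.ext rfl
      map_smul' := fun r w => by funext k; exact Subtype.ext rfl }
  -- the retraction
  have hmemP : ∀ u : Fin n ⊕ Fin n → ↥(pullbackRing ρ₁ ρ₂),
      (fun i => (Matrix.vecMul (fun k => ((u k : B₁ × B₂)).1) q₁ i,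
        Matrix.vecMul (fun k => ((u k : B₁ × B₂)).2) q₂ i))
        ∈ fixedSubmodule ρ₁ ρ₂ q₁ q₂ := by
    intro u
    refine ⟨?_, ?_, ?_⟩
    · intro i
      show ρ₁ (Matrix.vecMul (fun k => ((u k : B₁ × B₂)).1) q₁ i)
        = ρ₂ (Matrix.vecMul (fun k => ((u k : B₁ × B₂)).2) q₂ i)
      have h1 := congrFun (vecMul_map' ρ₁ (fun k => ((u k : B₁ × B₂)).1) q₁) i
      have h2 := congrFun (vecMul_map' ρ₂ (fun k => ((u k : B₁ × B₂)).2) q₂) i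
      rw [h1, h2, hmapq₁, hmapq₂]
      congr 1
      funext k
      exact (u k).2
    · show Matrix.vecMul (fun i => (Matrix.vecMul (fun k => ((u k : B₁ × B₂)).1) q₁) i) q₁
        = fun i => (Matrix.vecMul (fun k => ((u k : B₁ × B₂)).1) q₁) i
      rw [Matrix.vecMul_vecMul, hq₁idem]
    · show Matrix.vecMul (fun i => (Matrix.vecMul (fun k => ((u k : B₁ × B₂)).2) q₂) i) q₂
        = fun i => (Matrix.vecMul (fun k => ((u k : B₁ × B₂)).2) q₂) i
      rw [Matrix.vecMul_vecMul, hq₂idem]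
  have hu1add : ∀ u v : Fin n ⊕ Fin n → ↥(pullbackRing ρ₁ ρ₂),
      (fun k => (((u + v) k : B₁ × B₂)).1)
        = (fun k => ((u k : B₁ × B₂)).1) + fun k => ((v k : B₁ × B₂)).1 := fun _ _ => rfl
  have hu2add : ∀ u v : Fin n ⊕ Fin n → ↥(pullbackRing ρ₁ ρ₂),
      (fun k => (((u + v) k : B₁ × B₂)).2)
        = (fun k => ((u k : B₁ × B₂)).2) + fun k => ((v k : B₁ × B₂)).2 := fun _ _ => rfl
  let retr : (Fin n ⊕ Fin n → ↥(pullbackRing ρ₁ ρ₂)) →ₗ[↥(pullbackRing ρ₁ ρ₂)]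
      ↥(fixedSubmodule ρ₁ ρ₂ q₁ q₂) :=
    { toFun := fun u => ⟨_, hmemP u⟩
      map_add' := fun u v => by
        apply Subtype.ext
        funext i
        refine Prod.ext ?_ ?_
        · show Matrix.vecMul (fun k => (((u + v) k : B₁ × B₂)).1) q₁ i = _
          rw [hu1add, Matrix.add_vecMul]
          rfl
        · show Matrix.vecMul (fun k => (((u + v) k : B₁ × B₂)).2) q₂ i = _
          rw [hu2add, Matrix.add_vecMul]
          rfl
      map_smul' := fun r u => by
        apply Subtype.ext
        funext i
        refine Prod.ext ?_ ?_
        · show Matrix.vecMul (fun k => (((r • u) k : B₁ × B₂)).1) q₁ i = _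
          have h : (fun k => (((r • u) k : B₁ × B₂)).1)
              = fun k => (r : B₁ × B₂).1 * ((u k : B₁ × B₂)).1 := rfl
          rw [h, vecMul_mul_left]
          rfl
        · show Matrix.vecMul (fun k => (((r • u) k : B₁ × B₂)).2) q₂ i = _
          have h : (fun k => (((r • u) k : B₁ × B₂)).2)
              = fun k => (r : B₁ × B₂).2 * ((u k : B₁ × B₂)).2 := rfl
          rw [h, vecMul_mul_left]
          rfl }
  have hsplit : retr.comp inc = LinearMap.id := by
    apply LinearMap.ext
    intro w
    apply Subtype.ext
    funext i
    refine Prod.ext ?_ ?_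
    · show Matrix.vecMul (fun k => (w.1 k).1) q₁ i = (w.1 i).1
      exact congrFun w.2.2.1 i
    · show Matrix.vecMul (fun k => (w.1 k).2) q₂ i = (w.1 i).2
      exact congrFun w.2.2.2 i
  have hretr_surj : Function.Surjective retr := by
    intro w
    exact ⟨inc w, congrFun (congrArg (fun f => f.toFun) hsplit) w⟩
  haveI hfinF : Module.Finite ↥(pullbackRing ρ₁ ρ₂) ↥(fixedSubmodule ρ₁ ρ₂ q₁ q₂) :=
    Module.Finite.of_surjective retr hretr_surj
  haveI hprojF : Module.Projective ↥(pullbackRing ρ₁ ρ₂) ↥(fixedSubmodule ρ₁ ρ₂ q₁ q₂) :=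
    Module.Projective.of_split inc retr hsplit
  refine ⟨?_, ⟨E⟩, Module.Finite.equiv E.symm, Module.Projective.of_equiv E.symm⟩
  intro i j
  have h := congrFun (congrFun (hmapq₁.trans hmapq₂.symm) i) j
  simpa [Matrix.map_apply] using h


end MilnorClutching
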